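/- arXiv:2007.01399 — 2 statements merged into one kernel-verified Lean document; each statement's English description precedes it below -/
import Mathlib

section
/- Let W = Der(k[[x₁,…,x_m]]) be the Lie algebra of formal vector fields, O = k[[x₁,…,x_m]], and z a Lie subalgebra of gl_l(k). Let D be an associative algebra containing O and elements y₁,…,y_l, u₁,…,u_l. Then the map Φ: W ⋉ (z ⊗ O) → D defined by Φ(v + A ⊗ p) = v + p·(−Σ_{i,j} A_{ij} y_j u_i), is a Lie algebra homomorphism into D with its commutator bracket, provided: v acts as a derivation extending the vector field action on O, [u_i, y_j] = δ_{ij}, [u_i, x_k] is given by the natural action, the y's commute among themselves and with O, and the u's commute among themselves. -/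
/-- the assignment Φ(v + A ⊗ p) = v + p·(−Σ_{i,j} A_{ij} y_j u_i) is a Lie
algebra homomorphism from W ⋉ (z ⊗ O) (W = Der(k[[x₁,…,x_m]]), z ⊆ gl_l(k)) into an
associative algebra D (with the commutator bracket) containing O and elements y, u
subject to the stated relations. -/
theorem semidirect_product_lie_algebra_hom
    (k : Type*) [Field k] (m l : ℕ)
    (D : Type*) [Ring D] [Algebra k D]
    -- the ring O = k[[x₁,…,x_m]] of formal power series, embedded in D
    (ι : MvPowerSeries (Fin m) k →ₐ[k] D)
    -- formal vector fields W = Der(O) realized in D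
    (θ : Derivation k (MvPowerSeries (Fin m) k) (MvPowerSeries (Fin m) k) →ₗ[k] D)
    -- the elements y₁,…,y_l, u₁,…,u_l of D
    (y u : Fin l → D)
    -- v acts as a derivation extending the vector field action on O
    (hθder : ∀ v f, θ v * ι f - ι f * θ v = ι (v f))
    (hθlie : ∀ v v', θ v * θ v' - θ v' * θ v = θ ⁅v, v'⁆)
    -- [u_i, y_j] = δ_{ij}
    (huy : ∀ i j, u i * y j - y j * u i = if i = j then 1 else 0)
    -- the u's and y's commute with O (the natural action of u_i on the x's is trivial)
    (huO : ∀ i f, u i * ι f = ι f * u i)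
    (hyO : ∀ j f, y j * ι f = ι f * y j)
    -- the u's and y's commute with the vector fields
    (huθ : ∀ i v, u i * θ v = θ v * u i)
    (hyθ : ∀ j v, y j * θ v = θ v * y j)
    -- the y's commute among themselves and the u's commute among themselves
    (hyy : ∀ i j, y i * y j = y j * y i)
    (huu : ∀ i j, u i * u j = u j * u i)
    -- Φ(v + A ⊗ p) = v + p·(−Σ_{i,j} A_{ij} y_j u_i)
    (Φ : Derivation k (MvPowerSeries (Fin m) k) (MvPowerSeries (Fin m) k) →
      Matrix (Fin l) (Fin l) k → MvPowerSeries (Fin m) k → D)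
    (hΦ : ∀ v A p, Φ v A p = θ v + ι p * (-(∑ i, ∑ j, A i j • (y j * u i)))) :
    -- Φ respects the semidirect-product Lie bracket
    ∀ v v' A A' p p',
      Φ v A p * Φ v' A' p' - Φ v' A' p' * Φ v A p
        = Φ ⁅v, v'⁆ (A * A' - A' * A) (p * p') + Φ 0 A' (v p') - Φ 0 A (v' p) := by
  intro v v' A A' p p'
  set T : Matrix (Fin l) (Fin l) k → D := fun B => ∑ i, ∑ j, B i j • (y j * u i) with hTdef
  -- rewrite Φ
  have hΦ' : ∀ w B q, Φ w B q = θ w - ι q * T B := by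
    intro w B q
    rw [hΦ, mul_neg, sub_eq_add_neg]
  -- single generators commute with ι
  have hty : ∀ i j f, (y j * u i) * ι f = ι f * (y j * u i) := by
    intro i j f
    rw [mul_assoc, huO, ← mul_assoc, hyO, mul_assoc]
  have htθ : ∀ i j w, (y j * u i) * θ w = θ w * (y j * u i) := by
    intro i j w
    rw [mul_assoc, huθ, ← mul_assoc, hyθ, mul_assoc]
  -- T commutes with ι and θ
  have hTι : ∀ B f, T B * ι f = ι f * T B := by
    intro B f
    simp only [hTdef, Finset.sum_mul, Finset.mul_sum, smul_mul_assoc, mul_smul_comm, hty]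
  have hTθ : ∀ B w, T B * θ w = θ w * T B := by
    intro B w
    simp only [hTdef, Finset.sum_mul, Finset.mul_sum, smul_mul_assoc, mul_smul_comm, htθ]
  -- commutation relations within generators (rewritten)
  have h1 : ∀ i b, u i * y b = y b * u i + (if i = b then (1:D) else 0) := by
    intro i b
    have := huy i b
    rw [← this]; noncomm_ring
  -- key single-term commutator
  have key : ∀ i j a b, (y j * u i) * (y b * u a) - (y b * u a) * (y j * u i)
      = (if i = b then y j * u a else 0) - (if a = j then y b * u i else 0) := by
    intro i j a b
    have e1 : (y j * u i) * (y b * u a)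
        = (y j * y b) * (u i * u a) + (if i = b then y j * u a else 0) := by
      calc (y j * u i) * (y b * u a) = y j * (u i * y b) * u a := by noncomm_ring
        _ = y j * (y b * u i + (if i = b then (1:D) else 0)) * u a := by rw [h1]
        _ = (y j * y b) * (u i * u a) + y j * (if i = b then (1:D) else 0) * u a := by
              noncomm_ring
        _ = (y j * y b) * (u i * u a) + (if i = b then y j * u a else 0) := by
              split_ifs <;> simp
    have e2 : (y b * u a) * (y j * u i)
        = (y b * y j) * (u a * u i) + (if a = j then y b * u i else 0) := by
      calc (y b * u a) * (y j * u i) = y b * (u a * y j) * u i := by noncomm_ring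
        _ = y b * (y j * u a + (if a = j then (1:D) else 0)) * u i := by rw [h1]
        _ = (y b * y j) * (u a * u i) + y b * (if a = j then (1:D) else 0) * u i := by
              noncomm_ring
        _ = (y b * y j) * (u a * u i) + (if a = j then y b * u i else 0) := by
              split_ifs <;> simp
    rw [e1, e2, hyy j b, huu i a]
    abel
  -- commutator of a single term with T C
  have step1 : ∀ (C : Matrix (Fin l) (Fin l) k) i j,
      (y j * u i) * T C - T C * (y j * u i)
        = (∑ a, C a i • (y j * u a)) - ∑ b, C j b • (y b * u i) := by
    intro C i j
    have expand : (y j * u i) * T C - T C * (y j * u i)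
        = ∑ a, ∑ b, C a b • ((y j * u i) * (y b * u a) - (y b * u a) * (y j * u i)) := by
      simp only [hTdef, Finset.mul_sum, Finset.sum_mul, mul_smul_comm, smul_mul_assoc,
        smul_sub, Finset.sum_sub_distrib]
    rw [expand]
    have : ∀ a b, C a b • ((y j * u i) * (y b * u a) - (y b * u a) * (y j * u i))
        = (if i = b then C a b • (y j * u a) else 0) - (if a = j then C a b • (y b * u i) else 0) := by
      intro a b
      rw [key, smul_sub]
      congr 1 <;> (split_ifs <;> simp)
    simp only [this, Finset.sum_sub_distrib]
    congr 1
    · apply Finset.sum_congr rfl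
      intro a _
      simp [eq_comm]
    · rw [Finset.sum_comm]
      apply Finset.sum_congr rfl
      intro b _
      simp
  -- linearity of T in the matrix
  have hTsub : ∀ M N : Matrix (Fin l) (Fin l) k, T (M - N) = T M - T N := by
    intro M N
    simp only [hTdef, Matrix.sub_apply, sub_smul, Finset.sum_sub_distrib]
  -- bracket of T's
  have hTbr : ∀ B C : Matrix (Fin l) (Fin l) k,
      T B * T C - T C * T B = T (C * B) - T (B * C) := by
    intro B C
    have sum3 : ∀ f : Fin l → Fin l → Fin l → D,
        ∑ i, ∑ j, ∑ a, f i j a = ∑ a, ∑ j, ∑ i, f i j a := by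
      intro f
      calc ∑ i, ∑ j, ∑ a, f i j a
          = ∑ i, ∑ a, ∑ j, f i j a :=
            Finset.sum_congr rfl (fun i _ => Finset.sum_comm)
        _ = ∑ a, ∑ i, ∑ j, f i j a := Finset.sum_comm
        _ = ∑ a, ∑ j, ∑ i, f i j a :=
            Finset.sum_congr rfl (fun a _ => Finset.sum_comm)
    have gen : ∀ z : D, T B * z - z * T B
        = ∑ i, ∑ j, B i j • ((y j * u i) * z - z * (y j * u i)) := by
      intro z
      simp only [hTdef, Finset.sum_mul, Finset.mul_sum, smul_mul_assoc, mul_smul_comm,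
        smul_sub, Finset.sum_sub_distrib]
    rw [gen (T C)]
    simp only [step1, smul_sub, Finset.smul_sum, smul_smul, Finset.sum_sub_distrib]
    congr 1
    · -- ∑ i ∑ j ∑ a (B i j * C a i) • t j a = T (C * B)
      simp only [hTdef, Matrix.mul_apply, Finset.sum_smul]
      rw [sum3]
      apply Finset.sum_congr rfl; intro a _
      apply Finset.sum_congr rfl; intro j _
      apply Finset.sum_congr rfl; intro i _
      rw [mul_comm]
    · simp only [hTdef, Matrix.mul_apply, Finset.sum_smul]
      apply Finset.sum_congr rfl; intro i _
      rw [Finset.sum_comm]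
  -- the three main commutator computations
  have h2 : ∀ w q (B : Matrix (Fin l) (Fin l) k),
      θ w * (ι q * T B) - (ι q * T B) * θ w = ι (w q) * T B := by
    intro w q B
    calc θ w * (ι q * T B) - (ι q * T B) * θ w
        = θ w * ι q * T B - ι q * (T B * θ w) := by rw [mul_assoc, ← mul_assoc]
      _ = θ w * ι q * T B - ι q * (θ w * T B) := by rw [hTθ]
      _ = (θ w * ι q - ι q * θ w) * T B := by noncomm_ring
      _ = ι (w q) * T B := by rw [hθder]
  have h3 : (ι p * T A) * (ι p' * T A') - (ι p' * T A') * (ι p * T A)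
      = ι (p * p') * (T (A' * A) - T (A * A')) := by
    have c1 : (ι p * T A) * (ι p' * T A') = ι (p * p') * (T A * T A') := by
      calc (ι p * T A) * (ι p' * T A') = ι p * (T A * ι p') * T A' := by noncomm_ring
        _ = ι p * (ι p' * T A) * T A' := by rw [hTι]
        _ = (ι p * ι p') * (T A * T A') := by noncomm_ring
        _ = ι (p * p') * (T A * T A') := by rw [← map_mul]
    have c2 : (ι p' * T A') * (ι p * T A) = ι (p * p') * (T A' * T A) := by
      calc (ι p' * T A') * (ι p * T A) = ι p' * (T A' * ι p) * T A := by noncomm_ring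
        _ = ι p' * (ι p * T A') * T A := by rw [hTι]
        _ = (ι p' * ι p) * (T A' * T A) := by noncomm_ring
        _ = ι (p * p') * (T A' * T A) := by rw [← map_mul, mul_comm p' p]
    rw [c1, c2, ← mul_sub, hTbr]
  have h1' := hθlie v v'
  have h2a := h2 v p' A'
  have h2b := h2 v' p A
  -- assemble
  simp only [hΦ']
  rw [hTsub]
  linear_combination (norm := noncomm_ring) h1' - h2a + h2b + h3
end

section
/- Let X be a topological space, U = {U_α} an open cover, Λ a sheaf of associative C-algebras on X, and 0 → A → Γ →^p Λ → 0 a locally trivial square-zero extension, split over each U_α by C-linear sheaf maps j_α: Λ|_{U_α} → Γ|_{U_α} with p ∘ j_α = id. Then (i) h_{αβ} := j_β − j_α factors through A and defines a Čech 1-cocycle with values in the sheaf Hom_C(Λ, A), and (ii) f_α(λ₁, λ₂) := q_α(j_α(λ₁)j_α(λ₂)) with q_α = id − j_α ∘ p is a Hochschild 2-cocycle over U_α, and these satisfy the compatibility f_β − f_α = d h_{αβ} on overlaps, where d is the Hochschild differential. -/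
/-- for a locally trivial square-zero extension 0 → A → Γ →p Λ → 0 of
sheaves of ℂ-algebras split over each member of a cover by ℂ-linear sections j_α
(here formulated, as the verification is local, on sections over the relevant opens and
overlaps): (i) h_{αβ} = j_β − j_α takes values in A = ker p and is a Čech 1-cocycle;
(ii) f_α = q_α(j_α(·)j_α(·)) (q_α = id − j_α∘p) is a Hochschild 2-cocycle, and
f_β − f_α = d h_{αβ}, where the bimodule action of Λ on ker p is through the lifts j. -/
theorem cech_hochschild_cocycle_of_local_splittings
    (Λ Γ : Type*) [Ring Λ] [Algebra ℂ Λ] [Ring Γ] [Algebra ℂ Γ]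
    (p : Γ →ₐ[ℂ] Λ) (hp : Function.Surjective p)
    (hsq : ∀ a b : Γ, p a = 0 → p b = 0 → a * b = 0)
    -- the index set of the cover and the local ℂ-linear splittings
    (I : Type*) (j : I → (Λ →ₗ[ℂ] Γ))
    (hj : ∀ (α : I) (x : Λ), p (j α x) = x) :
    -- (i) h_{αβ} := j_β − j_α takes values in ker p ≅ A and δh = 0
    (∀ (α β : I) (x : Λ), p ((j β - j α) x) = 0) ∧
    (∀ (α β γ : I) (x : Λ),
      (j β - j α) x + (j γ - j β) x - (j γ - j α) x = 0) ∧
    -- (ii) f_α(x,y) = q_α(j_α(x)j_α(y)) = j_α(x)j_α(y) − j_α(xy) is a Hochschild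
    -- 2-cocycle (valued in ker p, with the bimodule action via the lifts j_α)
    (∀ (α : I) (x y z : Λ),
      j α x * (j α y * j α z - j α (y * z))
        - (j α (x * y) * j α z - j α ((x * y) * z))
        + (j α x * j α (y * z) - j α (x * (y * z)))
        - (j α x * j α y - j α (x * y)) * j α z = 0) ∧
    -- and f_β − f_α = d h_{αβ}
    (∀ (α β : I) (x y : Λ),
      (j β x * j β y - j β (x * y)) - (j α x * j α y - j α (x * y))
        = j α x * (j β - j α) y - (j β - j α) (x * y) + (j β - j α) x * j α y) := by
  refine ⟨?_, ?_, ?_, ?_⟩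
  · intro α β x
    simp [hj]
  · intro α β γ x
    simp only [LinearMap.sub_apply]
    abel
  · intro α x y z
    rw [mul_assoc x y z]
    noncomm_ring
  · intro α β x y
    have h1 : p (j β x - j α x) = 0 := by simp [hj]
    have h2 : p (j β y - j α y) = 0 := by simp [hj]
    have key := hsq _ _ h1 h2
    simp only [LinearMap.sub_apply]
    rw [← sub_eq_zero, ← key]
    noncomm_ring
end
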